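/- Let a¹, a², a³: ℤ → ℂ be sequences in h^ν ∩ h¹ for ν ≥ 0, and define R_p = Σ_{(p,q,r,s)∈Γ₀} a¹_q · conj(a²_r) · a³_s. Then ‖R‖_{h^ν} ≲ Σ over permutations σ of {1,2,3} of ‖a^{σ(1)}‖_{h^ν} · ‖a^{σ(2)}‖_{h¹} · ‖a^{σ(3)}‖_{h¹}. -/

import Mathlib

open scoped ComplexConjugate

/-- The reduced resonant nonlinearity over `Γ₀ = {(p,q,r,s) : {p,r} = {q,s}}`. -/
noncomputable def Rop (f g h : ℤ → ℂ) (p : ℤ) : ℂ :=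
  ∑' x : {x : ℤ × ℤ × ℤ // ({p, x.2.1} : Set ℤ) = {x.1, x.2.2}},
    f x.val.1 * conj (g x.val.2.1) * h x.val.2.2

/-- The `h^ν` norm of a sequence. -/
noncomputable def hnorm (ν : ℝ) (a : ℤ → ℂ) : ℝ :=
  Real.sqrt (∑' p : ℤ, (1 + (p : ℝ) ^ 2) ^ ν * ‖a p‖ ^ 2)

open scoped ENNReal

private lemma aux_pow_toReal (y : ℝ) : ‖y‖ ^ (2 : ℝ≥0∞).toReal = y ^ 2 := by
  rw [ENNReal.toReal_ofNat, show ((2:ℝ)) = ((2:ℕ):ℝ) by norm_num, Real.rpow_natCast]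
  rw [Real.norm_eq_abs, sq_abs]

private lemma aux_memlp {x : ℤ → ℝ} (hx : Summable fun p => (x p) ^ 2) :
    Memℓp x 2 :=
  memℓp_gen (by simpa only [aux_pow_toReal] using hx)

private lemma aux_lp_norm (f : lp (fun _ : ℤ => ℝ) 2) :
    ‖f‖ = Real.sqrt (∑' p, (f p) ^ 2) := by
  rw [lp.norm_eq_tsum_rpow (by norm_num) f, Real.sqrt_eq_rpow]
  congr 1
  exact tsum_congr fun p => aux_pow_toReal _

private lemma aux_minkowski (c d : ℝ) (x y : ℤ → ℝ)
    (hx : Summable fun p => (x p) ^ 2) (hy : Summable fun p => (y p) ^ 2) :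
    Real.sqrt (∑' p, (c * x p + d * y p) ^ 2) ≤
      |c| * Real.sqrt (∑' p, (x p) ^ 2) + |d| * Real.sqrt (∑' p, (y p) ^ 2) := by
  set X : lp (fun _ : ℤ => ℝ) 2 := ⟨x, aux_memlp hx⟩ with hX
  set Y : lp (fun _ : ℤ => ℝ) 2 := ⟨y, aux_memlp hy⟩ with hY
  have hco : ∀ p, (c • X + d • Y : lp (fun _ : ℤ => ℝ) 2) p = c * x p + d * y p := by
    intro p
    simp [lp.coeFn_add, lp.coeFn_smul, hX, hY]
    rfl
  calc Real.sqrt (∑' p, (c * x p + d * y p) ^ 2)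
      = ‖(c • X + d • Y : lp (fun _ : ℤ => ℝ) 2)‖ := by
        rw [aux_lp_norm]
        exact congrArg Real.sqrt (tsum_congr fun p => by rw [hco])
    _ ≤ ‖c • X‖ + ‖d • Y‖ := norm_add_le _ _
    _ = |c| * ‖X‖ + |d| * ‖Y‖ := by
        rw [norm_smul, norm_smul, Real.norm_eq_abs, Real.norm_eq_abs]
    _ = |c| * Real.sqrt (∑' p, (x p) ^ 2) + |d| * Real.sqrt (∑' p, (y p) ^ 2) := by
        rw [aux_lp_norm X, aux_lp_norm Y]

private lemma aux_cauchy_schwarz (x y : ℤ → ℝ)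
    (hx : Summable fun p => (x p) ^ 2) (hy : Summable fun p => (y p) ^ 2) :
    ∑' p, x p * y p ≤ Real.sqrt (∑' p, (x p) ^ 2) * Real.sqrt (∑' p, (y p) ^ 2) := by
  set X : lp (fun _ : ℤ => ℝ) 2 := ⟨x, aux_memlp hx⟩ with hX
  set Y : lp (fun _ : ℤ => ℝ) 2 := ⟨y, aux_memlp hy⟩ with hY
  have h1 : ∑' p, x p * y p = (inner ℝ X Y : ℝ) := by
    rw [lp.inner_eq_tsum]
    exact tsum_congr fun p => by simp [RCLike.inner_apply]; exact mul_comm _ _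
  rw [h1, ← aux_lp_norm X, ← aux_lp_norm Y]
  exact real_inner_le_norm X Y

private lemma aux_Rop_eq (a1 a2 a3 : ℤ → ℂ) (p : ℤ)
    (h12 : Summable fun r : ℤ => a1 r * conj (a2 r))
    (h23 : Summable fun r : ℤ => conj (a2 r) * a3 r) :
    Rop a1 a2 a3 p = a1 p * (∑' r : ℤ, conj (a2 r) * a3 r)
      + (∑' r : {r : ℤ // r ≠ p}, a1 r.val * conj (a2 r.val)) * a3 p := by
  classical
  set f : ℤ × ℤ × ℤ → ℂ := fun x => a1 x.1 * conj (a2 x.2.1) * a3 x.2.2 with hf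
  set S : Set (ℤ × ℤ × ℤ) := {x | ({p, x.2.1} : Set ℤ) = {x.1, x.2.2}} with hS
  set g1 : ℤ → ℤ × ℤ × ℤ := fun r => (p, r, r) with hg1
  set g2 : ℤ → ℤ × ℤ × ℤ := fun r => (r, r, p) with hg2
  set s2 : Set ℤ := {r | r ≠ p} with hs2
  have hSeq : S = Set.range g1 ∪ g2 '' s2 := by
    ext ⟨q, r, s⟩
    simp only [hS, Set.mem_setOf_eq, Set.mem_union, Set.mem_range, Set.mem_image, hg1, hg2, hs2,
      Set.pair_eq_pair_iff, Prod.mk.injEq]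
    constructor
    · rintro (⟨hq, hrs⟩ | ⟨hs, hr⟩)
      · exact Or.inl ⟨r, hq, rfl, hrs⟩
      · by_cases hrp : r = p
        · subst hrp; subst hr; subst hs; exact Or.inl ⟨r, rfl, rfl, rfl⟩
        · exact Or.inr ⟨r, hrp, hr, rfl, hs⟩
    · rintro (⟨r', h1', h2', h3'⟩ | ⟨r', hne, h1', h2', h3'⟩)
      · exact Or.inl ⟨h1', h2'.symm.trans h3'⟩
      · exact Or.inr ⟨h3', h2'.symm.trans h1'⟩
  have hinj1 : Function.Injective g1 := by
    intro a b h; simpa [hg1, Prod.ext_iff] using h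
  have hinj2 : Set.InjOn g2 s2 := by
    intro a _ b _ h; simpa [hg2, Prod.ext_iff] using h
  have hdisj : Disjoint (Set.range g1) (g2 '' s2) := by
    rw [Set.disjoint_left]
    rintro x ⟨r, rfl⟩ ⟨r', hr', heq⟩
    simp only [hg1, hg2, Prod.ext_iff] at heq
    exact hr' heq.1
  have hsum1 : Summable ((f ∘ (↑)) : Set.range g1 → ℂ) := by
    rw [← Equiv.summable_iff (Equiv.ofInjective g1 hinj1)]
    have he : ((f ∘ (↑)) ∘ (Equiv.ofInjective g1 hinj1)) =
        fun r : ℤ => a1 p * (conj (a2 r) * a3 r) := by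
      funext r
      simp [hf, hg1, mul_assoc]
    rw [he]
    exact h23.mul_left _
  have hsum2 : Summable ((f ∘ (↑)) : ↑(g2 '' s2) → ℂ) := by
    rw [← Equiv.summable_iff (Equiv.Set.imageOfInjOn g2 s2 hinj2)]
    have he : ((f ∘ (↑)) ∘ (Equiv.Set.imageOfInjOn g2 s2 hinj2)) =
        fun r : s2 => a1 r * conj (a2 r) * a3 p := by
      funext r
      simp [hf, hg2, Equiv.Set.imageOfInjOn]
    rw [he]
    exact (h12.subtype _).mul_right _
  have key : (∑' x : S, f x) = (∑' x : Set.range g1, f x) + ∑' x : ↑(g2 '' s2), f x := by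
    rw [tsum_congr_set_coe f hSeq]
    exact Summable.tsum_union_disjoint hdisj hsum1 hsum2
  have e1 : (∑' x : Set.range g1, f x) = a1 p * ∑' r : ℤ, conj (a2 r) * a3 r := by
    rw [tsum_range f hinj1]
    rw [← tsum_mul_left]
    exact tsum_congr fun r => by simp [hf, hg1, mul_assoc]
  have e2 : (∑' x : ↑(g2 '' s2), f x) =
      (∑' r : {r : ℤ // r ≠ p}, a1 r.val * conj (a2 r.val)) * a3 p := by
    rw [tsum_image f hinj2]
    rw [← tsum_mul_right]
    rfl
  show (∑' x : S, f x) = _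
  rw [key, e1, e2]

theorem stmt_4 (ν : ℝ) (hν : 0 ≤ ν) :
    ∃ C > 0, ∀ a1 a2 a3 : ℤ → ℂ,
      Summable (fun p : ℤ => (1 + (p : ℝ) ^ 2) ^ ν * ‖a1 p‖ ^ 2) →
      Summable (fun p : ℤ => (1 + (p : ℝ) ^ 2) ^ ν * ‖a2 p‖ ^ 2) →
      Summable (fun p : ℤ => (1 + (p : ℝ) ^ 2) ^ ν * ‖a3 p‖ ^ 2) →
      Summable (fun p : ℤ => (1 + (p : ℝ) ^ 2) * ‖a1 p‖ ^ 2) →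
      Summable (fun p : ℤ => (1 + (p : ℝ) ^ 2) * ‖a2 p‖ ^ 2) →
      Summable (fun p : ℤ => (1 + (p : ℝ) ^ 2) * ‖a3 p‖ ^ 2) →
      hnorm ν (Rop a1 a2 a3) ≤
        C * (hnorm ν a1 * hnorm 1 a2 * hnorm 1 a3 +
             hnorm ν a2 * hnorm 1 a1 * hnorm 1 a3 +
             hnorm ν a3 * hnorm 1 a1 * hnorm 1 a2) := by
  refine ⟨1, one_pos, ?_⟩
  intro a1 a2 a3 hs1 hs2 hs3 h1 h2 h3
  have hbase : ∀ p : ℤ, (0:ℝ) < 1 + (p:ℝ)^2 := fun p => by positivity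
  have wnn : ∀ p : ℤ, (0:ℝ) ≤ (1 + (p:ℝ)^2) ^ ν := fun p => Real.rpow_nonneg (hbase p).le ν
  have hnorm1_eq : ∀ a : ℤ → ℂ, hnorm 1 a = Real.sqrt (∑' p : ℤ, (1 + (p:ℝ)^2) * ‖a p‖^2) := by
    intro a; unfold hnorm; simp [Real.rpow_one]
  have hn1 : ∀ a, 0 ≤ hnorm 1 a := fun a => by unfold hnorm; exact Real.sqrt_nonneg _
  have hnν : ∀ a, 0 ≤ hnorm ν a := fun a => by unfold hnorm; exact Real.sqrt_nonneg _
  have sqs : ∀ a : ℤ → ℂ, Summable (fun p : ℤ => (1+(p:ℝ)^2) * ‖a p‖^2) →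
      Summable fun p : ℤ => ‖a p‖^2 := by
    intro a ha
    refine ha.of_nonneg_of_le (fun p => sq_nonneg _) (fun p => ?_)
    nlinarith [sq_nonneg ((p:ℝ)), sq_nonneg ‖a p‖]
  have sq1 := sqs a1 h1
  have sq2 := sqs a2 h2
  have sq3 := sqs a3 h3
  have l2le : ∀ a : ℤ → ℂ, Summable (fun p : ℤ => (1+(p:ℝ)^2) * ‖a p‖^2) →
      Real.sqrt (∑' p : ℤ, ‖a p‖^2) ≤ hnorm 1 a := by
    intro a ha
    rw [hnorm1_eq]
    apply Real.sqrt_le_sqrt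
    refine Summable.tsum_le_tsum (fun p => ?_) (sqs a ha) ha
    nlinarith [sq_nonneg ((p:ℝ)), sq_nonneg ‖a p‖]
  have pmul : ∀ b c : ℤ → ℂ, Summable (fun p:ℤ => ‖b p‖^2) → Summable (fun p:ℤ => ‖c p‖^2) →
      Summable fun p : ℤ => ‖b p‖ * ‖c p‖ := by
    intro b c hb hc
    refine ((hb.add hc).div_const 2).of_nonneg_of_le
      (fun p => mul_nonneg (norm_nonneg _) (norm_nonneg _)) (fun p => ?_)
    nlinarith [sq_nonneg (‖b p‖ - ‖c p‖)]
  have pm23 := pmul a2 a3 sq2 sq3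
  have pm12 := pmul a1 a2 sq1 sq2
  have h23 : Summable fun r : ℤ => conj (a2 r) * a3 r := by
    apply Summable.of_norm
    simpa [norm_mul] using pm23
  have h12 : Summable fun r : ℤ => a1 r * conj (a2 r) := by
    apply Summable.of_norm
    simpa [norm_mul] using pm12
  have csb : ∀ b c : ℤ → ℂ, Summable (fun p:ℤ => (1+(p:ℝ)^2) * ‖b p‖^2) →
      Summable (fun p:ℤ => (1+(p:ℝ)^2) * ‖c p‖^2) →
      (∑' p : ℤ, ‖b p‖ * ‖c p‖) ≤ hnorm 1 b * hnorm 1 c := by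
    intro b c hb hc
    calc (∑' p : ℤ, ‖b p‖ * ‖c p‖)
        ≤ Real.sqrt (∑' p : ℤ, ‖b p‖^2) * Real.sqrt (∑' p : ℤ, ‖c p‖^2) :=
          aux_cauchy_schwarz _ _ (sqs b hb) (sqs c hc)
      _ ≤ hnorm 1 b * hnorm 1 c :=
          mul_le_mul (l2le b hb) (l2le c hc) (Real.sqrt_nonneg _) (hn1 b)
  set c : ℝ := ‖∑' r : ℤ, conj (a2 r) * a3 r‖ with hcdef
  have c0 : 0 ≤ c := norm_nonneg _
  have hcle : c ≤ hnorm 1 a2 * hnorm 1 a3 := by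
    calc c ≤ ∑' r : ℤ, ‖conj (a2 r) * a3 r‖ :=
          norm_tsum_le_tsum_norm (by simpa [norm_mul] using pm23)
      _ = ∑' r : ℤ, ‖a2 r‖ * ‖a3 r‖ := tsum_congr fun r => by simp [norm_mul]
      _ ≤ _ := csb a2 a3 h2 h3
  set K : ℝ := hnorm 1 a1 * hnorm 1 a2 with hKdef
  have K0 : 0 ≤ K := mul_nonneg (hn1 _) (hn1 _)
  have hTle : ∀ p : ℤ, ‖∑' r : {r : ℤ // r ≠ p}, a1 r.val * conj (a2 r.val)‖ ≤ K := by
    intro p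
    have hsub : Summable fun r : {r : ℤ // r ≠ p} => ‖a1 r.val * conj (a2 r.val)‖ := by
      have := Summable.subtype (by simpa [norm_mul] using pm12 :
        Summable fun r : ℤ => ‖a1 r * conj (a2 r)‖) {r : ℤ | r ≠ p}
      exact this
    calc ‖∑' r : {r : ℤ // r ≠ p}, a1 r.val * conj (a2 r.val)‖
        ≤ ∑' r : {r : ℤ // r ≠ p}, ‖a1 r.val * conj (a2 r.val)‖ := norm_tsum_le_tsum_norm hsub
      _ ≤ ∑' r : ℤ, ‖a1 r * conj (a2 r)‖ :=
          Summable.tsum_subtype_le (fun r : ℤ => ‖a1 r * conj (a2 r)‖) {r : ℤ | r ≠ p}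
            (fun r => norm_nonneg _) (by simpa [norm_mul] using pm12)
      _ = ∑' r : ℤ, ‖a1 r‖ * ‖a2 r‖ := tsum_congr fun r => by simp [norm_mul]
      _ ≤ K := csb a1 a2 h1 h2
  set w : ℤ → ℝ := fun p => Real.sqrt ((1 + (p:ℝ)^2) ^ ν) with hwdef
  have hw0 : ∀ p, 0 ≤ w p := fun p => Real.sqrt_nonneg _
  have hwsq : ∀ p, (w p)^2 = (1+(p:ℝ)^2)^ν := fun p => Real.sq_sqrt (wnn p)
  have hx1 : Summable fun p : ℤ => (w p * ‖a1 p‖)^2 :=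
    hs1.congr fun p => by rw [mul_pow, hwsq]
  have hx3 : Summable fun p : ℤ => (w p * ‖a3 p‖)^2 :=
    hs3.congr fun p => by rw [mul_pow, hwsq]
  have hpt : ∀ p : ℤ, w p * ‖Rop a1 a2 a3 p‖ ≤ c * (w p * ‖a1 p‖) + K * (w p * ‖a3 p‖) := by
    intro p
    have hb : ‖Rop a1 a2 a3 p‖ ≤ ‖a1 p‖ * c + K * ‖a3 p‖ := by
      rw [aux_Rop_eq a1 a2 a3 p h12 h23]
      refine (norm_add_le _ _).trans ?_
      rw [norm_mul, norm_mul]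
      exact add_le_add le_rfl (mul_le_mul_of_nonneg_right (hTle p) (norm_nonneg _))
    calc w p * ‖Rop a1 a2 a3 p‖
        ≤ w p * (‖a1 p‖ * c + K * ‖a3 p‖) := mul_le_mul_of_nonneg_left hb (hw0 p)
      _ = c * (w p * ‖a1 p‖) + K * (w p * ‖a3 p‖) := by ring
  have hy : Summable fun p : ℤ => (c * (w p * ‖a1 p‖) + K * (w p * ‖a3 p‖))^2 := by
    refine ((hx1.mul_left (2*c^2)).add (hx3.mul_left (2*K^2))).of_nonneg_of_le
      (fun p => sq_nonneg _) (fun p => ?_)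
    nlinarith [sq_nonneg (c * (w p * ‖a1 p‖) - K * (w p * ‖a3 p‖))]
  have hRw : hnorm ν (Rop a1 a2 a3) = Real.sqrt (∑' p : ℤ, (w p * ‖Rop a1 a2 a3 p‖)^2) := by
    unfold hnorm
    congr 1
    exact tsum_congr fun p => by rw [mul_pow, hwsq]
  have hA1 : Real.sqrt (∑' p : ℤ, (w p * ‖a1 p‖)^2) = hnorm ν a1 := by
    unfold hnorm
    congr 1
    exact tsum_congr fun p => by rw [mul_pow, hwsq]
  have hA3 : Real.sqrt (∑' p : ℤ, (w p * ‖a3 p‖)^2) = hnorm ν a3 := by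
    unfold hnorm
    congr 1
    exact tsum_congr fun p => by rw [mul_pow, hwsq]
  have main : hnorm ν (Rop a1 a2 a3) ≤ c * hnorm ν a1 + K * hnorm ν a3 := by
    calc hnorm ν (Rop a1 a2 a3)
        = Real.sqrt (∑' p : ℤ, (w p * ‖Rop a1 a2 a3 p‖)^2) := hRw
      _ ≤ Real.sqrt (∑' p : ℤ, (c * (w p * ‖a1 p‖) + K * (w p * ‖a3 p‖))^2) := by
          apply Real.sqrt_le_sqrt
          refine Summable.tsum_le_tsum (fun p => ?_)
            (hy.of_nonneg_of_le (fun p => sq_nonneg _) (fun p =>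
              pow_le_pow_left₀ (mul_nonneg (hw0 p) (norm_nonneg _)) (hpt p) 2)) hy
          exact pow_le_pow_left₀ (mul_nonneg (hw0 p) (norm_nonneg _)) (hpt p) 2
      _ ≤ |c| * Real.sqrt (∑' p : ℤ, (w p * ‖a1 p‖)^2)
            + |K| * Real.sqrt (∑' p : ℤ, (w p * ‖a3 p‖)^2) := aux_minkowski c K _ _ hx1 hx3
      _ = c * hnorm ν a1 + K * hnorm ν a3 := by
          rw [hA1, hA3, abs_of_nonneg c0, abs_of_nonneg K0]
  have hmid : 0 ≤ hnorm ν a2 * hnorm 1 a1 * hnorm 1 a3 :=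
    mul_nonneg (mul_nonneg (hnν a2) (hn1 a1)) (hn1 a3)
  have step2 : c * hnorm ν a1 + K * hnorm ν a3 ≤
      1 * (hnorm ν a1 * hnorm 1 a2 * hnorm 1 a3 +
           hnorm ν a2 * hnorm 1 a1 * hnorm 1 a3 +
           hnorm ν a3 * hnorm 1 a1 * hnorm 1 a2) := by
    have t1 : c * hnorm ν a1 ≤ (hnorm 1 a2 * hnorm 1 a3) * hnorm ν a1 :=
      mul_le_mul_of_nonneg_right hcle (hnν a1)
    rw [hKdef]
    nlinarith [t1, hmid]
  exact main.trans step2
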